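/- Let μ be a nonnegative Borel measure on ℝ, invariant under the reflection z ↦ −z, with μ(ℝ) < ∞, and let f ∈ C¹(ℝ). Let c ≠ 0 and let u ∈ C²(ℝ) be bounded, monotone nonincreasing, with lim_{x→−∞} u(x) = 1 and lim_{x→+∞} u(x) = 0, satisfying c u'(x) + ∫_ℝ (u(x+z) − u(x)) dμ(z) + f(u(x)) = 0 for every x ∈ ℝ. Then u' ∈ L²(ℝ) and c ∫_ℝ u'(x)² dx = ∫₀¹ f(s) ds. -/

import Mathlib

open MeasureTheory Filter Topology Set

/-- Truncated nonlocal operator `D_{μ,δ} u (x) = ∫_{|z| ≥ δ} (u(x+z) − u(x)) dμ(z)`. -/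
noncomputable def Dtrunc (μ : Measure ℝ) (u : ℝ → ℝ) (δ : ℝ) (x : ℝ) : ℝ :=
  ∫ z in {z : ℝ | δ ≤ |z|}, (u (x + z) - u x) ∂μ

/-- The principal value `D_μ u (x)` exists and equals `L`. -/
def HasPV (μ : Measure ℝ) (u : ℝ → ℝ) (x : ℝ) (L : ℝ) : Prop :=
  Tendsto (fun δ => Dtrunc μ u δ x) (𝓝[>] (0 : ℝ)) (𝓝 L)

/-- A symmetric diffuse Lévy measure as in the paper. -/
structure LevyMeasure (μ : Measure ℝ) : Prop where
  symm : Measure.map (fun z : ℝ => -z) μ = μ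
  moment : ∫⁻ z, ENNReal.ofReal (min 1 (z ^ 2)) ∂μ < ⊤
  diffuse : ∀ x : ℝ, x ≠ 0 → μ {x} = 0

/-- A bistable nonlinearity with threshold `θ`. -/
structure Bistable (f : ℝ → ℝ) (θ : ℝ) : Prop where
  smooth : ContDiff ℝ 1 f
  f0 : f 0 = 0
  f1 : f 1 = 0
  df1 : deriv f 1 < 0
  θ_mem : θ ∈ Set.Ioo (0 : ℝ) 1
  df0 : deriv f 0 < 0
  neg : ∀ s ∈ Set.Ioo (0 : ℝ) θ, f s < 0
  fθ : f θ = 0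
  pos : ∀ s ∈ Set.Ioo θ (1 : ℝ), 0 < f s
  dfθ : 0 < deriv f θ

/-- An ignition nonlinearity with threshold `θ`. -/
structure Ignition (f : ℝ → ℝ) (θ : ℝ) : Prop where
  smooth : ContDiff ℝ 1 f
  f1 : f 1 = 0
  df1 : deriv f 1 < 0
  θ_mem : θ ∈ Set.Ioo (0 : ℝ) 1
  zero : ∀ s ∈ Set.Icc (0 : ℝ) θ, f s = 0
  pos : ∀ s ∈ Set.Ioo θ (1 : ℝ), 0 < f s

/-- A monostable nonlinearity. -/
structure Monostable (f : ℝ → ℝ) : Prop where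
  smooth : ContDiff ℝ 1 f
  f0 : f 0 = 0
  f1 : f 1 = 0
  df1 : deriv f 1 < 0
  pos : ∀ s ∈ Set.Ioo (0 : ℝ) 1, 0 < f s


/-- the energy identity `c ∫ u'² = ∫₀¹ f` (Proposition 2.1 (1)). -/
lemma integral_eq_of_symm_interval {g : ℝ → ℝ} (hg : Integrable g)
    {v : ℝ → ℝ} {L : ℝ} (h : ∀ R : ℝ, ∫ x in (-R)..R, g x = v R)
    (hv : Tendsto v atTop (𝓝 L)) : ∫ x, g x = L := by
  have ht := MeasureTheory.intervalIntegral_tendsto_integral hg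
    (tendsto_neg_atTop_atBot (G := ℝ)) (tendsto_id (α := ℝ))
  have ht' : Tendsto v atTop (𝓝 (∫ x, g x)) := by
    refine ht.congr fun R => ?_
    simpa using h R
  exact tendsto_nhds_unique ht' hv

theorem front_energy_identity
    (μ : Measure ℝ) [IsFiniteMeasure μ]
    (hsymm : Measure.map (fun z : ℝ => -z) μ = μ)
    (f : ℝ → ℝ) (hf : ContDiff ℝ 1 f)
    (c : ℝ) (hc : c ≠ 0)
    (u : ℝ → ℝ) (hu : ContDiff ℝ 2 u)
    (hb : ∃ M : ℝ, ∀ x, |u x| ≤ M) (ha : Antitone u)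
    (hlb : Tendsto u atBot (𝓝 (1 : ℝ))) (hlt : Tendsto u atTop (𝓝 (0 : ℝ)))
    (heq : ∀ x, c * deriv u x + (∫ z, (u (x + z) - u x) ∂μ) + f (u x) = 0) :
    MemLp (deriv u) 2 (volume : Measure ℝ) ∧
    c * ∫ x : ℝ, (deriv u x) ^ 2 = ∫ s in (0:ℝ)..1, f s := by
  clear hb
  have hud : Differentiable ℝ u := hu.differentiable (by norm_num)
  have hu'c : Continuous (deriv u) := hu.continuous_deriv (by norm_num)
  have huc : Continuous u := hud.continuous
  -- range of u
  have h0le : ∀ x, 0 ≤ u x := fun x =>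
    le_of_tendsto hlt (by filter_upwards [eventually_ge_atTop x] with y hy using ha hy)
  have hle1 : ∀ x, u x ≤ 1 := fun x =>
    ge_of_tendsto hlb (by filter_upwards [eventually_le_atBot x] with y hy using ha hy)
  have habs : ∀ a b : ℝ, |u a - u b| ≤ 1 := by
    intro a b
    rw [abs_sub_le_iff]
    constructor <;> [linarith [h0le b, hle1 a]; linarith [h0le a, hle1 b]]
  -- deriv nonpos
  have hd0 : ∀ x, deriv u x ≤ 0 := by
    intro x
    have h := (hud x).hasDerivAt
    rw [hasDerivAt_iff_tendsto_slope] at h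
    refine le_of_tendsto h ?_
    filter_upwards [self_mem_nhdsWithin] with y (hy : y ≠ x)
    rw [slope_def_field]
    rcases lt_or_gt_of_ne hy with h' | h'
    · exact div_nonpos_of_nonneg_of_nonpos (by linarith [ha h'.le]) (by linarith)
    · exact div_nonpos_of_nonpos_of_nonneg (by linarith [ha h'.le]) (by linarith)
  -- FTC on intervals
  have hderint : ∀ a b : ℝ, ∫ x in a..b, deriv u x = u b - u a := fun a b =>
    intervalIntegral.integral_deriv_eq_sub (fun x _ => hud x) (hu'c.intervalIntegrable a b)
  -- integrability of deriv u
  have hint : Integrable (deriv u) := by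
    refine MeasureTheory.integrable_of_intervalIntegral_norm_bounded
      (l := atTop) (a := fun R : ℝ => -R) (b := fun R : ℝ => R) 1
      (fun i => (hu'c.integrableOn_Ioc)) (tendsto_neg_atTop_atBot) tendsto_id ?_
    filter_upwards with R
    have h1 : ∫ x in (-R)..R, ‖deriv u x‖ = ∫ x in (-R)..R, -deriv u x := by
      refine intervalIntegral.integral_congr fun x _ => ?_
      simp [Real.norm_eq_abs, abs_of_nonpos (hd0 x)]
    rw [h1, intervalIntegral.integral_neg, hderint]
    have := h0le R; have := hle1 (-R); have := h0le (-R); have := hle1 R; linarith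
  -- bound on f over [0,1]
  obtain ⟨K, hK⟩ := isCompact_Icc.exists_bound_of_continuousOn
    (s := Icc (0:ℝ) 1) hf.continuous.continuousOn
  -- the nonlocal term
  set D : ℝ → ℝ := fun x => ∫ z, (u (x + z) - u x) ∂μ with hDdef
  have hDb : ∀ x, ‖D x‖ ≤ 1 * (μ univ).toReal := fun x =>
    norm_integral_le_of_norm_le_const (by
      filter_upwards with z
      simpa [Real.norm_eq_abs] using habs (x + z) x)
  -- bound on deriv u
  set C : ℝ := (1 * (μ univ).toReal + K) / |c| with hCdef
  have hdb : ∀ x, ‖deriv u x‖ ≤ C := by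
    intro x
    have h := heq x
    have h2 : c * deriv u x = -(D x + f (u x)) := by
      rw [hDdef]; simp only []; linarith [heq x]
    have h3 : |c| * |deriv u x| = |D x + f (u x)| := by
      rw [← abs_mul, h2, abs_neg]
    have h4 : |D x + f (u x)| ≤ 1 * (μ univ).toReal + K := by
      calc |D x + f (u x)| ≤ |D x| + |f (u x)| := abs_add_le _ _
        _ ≤ 1 * (μ univ).toReal + K := by
            have := hDb x
            have := hK (u x) ⟨h0le x, hle1 x⟩
            simp only [Real.norm_eq_abs] at *
            linarith
    rw [Real.norm_eq_abs, hCdef, le_div_iff₀ (abs_pos.mpr hc)]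
    calc |deriv u x| * |c| = |c| * |deriv u x| := mul_comm _ _
      _ = |D x + f (u x)| := h3
      _ ≤ _ := h4
  -- Memℒp 2
  have hsq : Integrable (fun x => deriv u x * deriv u x) :=
    hint.bdd_mul hu'c.aestronglyMeasurable (Eventually.of_forall hdb)
  have hmem : MemLp (deriv u) 2 (volume : Measure ℝ) :=
    (memLp_two_iff_integrable_sq hu'c.aestronglyMeasurable).2 (by simpa [sq] using hsq)
  refine ⟨hmem, ?_⟩
  -- ∫ u u' = -1/2
  have huu'_int : Integrable (fun x => u x * deriv u x) :=
    hint.bdd_mul huc.aestronglyMeasurable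
      (Eventually.of_forall (fun x => by rw [Real.norm_eq_abs, abs_of_nonneg (h0le x)]; exact hle1 x))
  have huu'_ab : ∀ a b : ℝ, ∫ x in a..b, u x * deriv u x = (u b) ^ 2 / 2 - (u a) ^ 2 / 2 := by
    intro a b
    have h := intervalIntegral.integral_comp_mul_deriv (a := a) (b := b)
      (f := u) (f' := deriv u) (g := id)
      (fun x _ => (hud x).hasDerivAt) hu'c.continuousOn continuous_id
    simp [Function.comp, integral_id] at h
    rw [h]; ring
  have huu' : ∫ x, u x * deriv u x = -(1/2) := by
    refine integral_eq_of_symm_interval huu'_int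
      (v := fun R => (u R) ^ 2 / 2 - (u (-R)) ^ 2 / 2) (fun R => huu'_ab (-R) R) ?_
    have h1 : Tendsto (fun R : ℝ => (u R) ^ 2 / 2) atTop (𝓝 (0 ^ 2 / 2)) :=
      ((hlt.pow 2).div_const 2)
    have h2 : Tendsto (fun R : ℝ => (u (-R)) ^ 2 / 2) atTop (𝓝 (1 ^ 2 / 2)) :=
      (((hlb.comp (tendsto_neg_atTop_atBot)).pow 2).div_const 2)
    have := h1.sub h2
    norm_num at this ⊢
    exact this
  -- translations
  have hint_z : ∀ z : ℝ, Integrable (fun x => deriv u (x + z)) := fun z =>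
    hint.comp_add_right z
  have huz_c : ∀ z : ℝ, Continuous (fun x : ℝ => u (x + z)) := fun z =>
    huc.comp (continuous_id.add continuous_const)
  have hu'z_c : ∀ z : ℝ, Continuous (fun x : ℝ => deriv u (x + z)) := fun z =>
    hu'c.comp (continuous_id.add continuous_const)
  have i1 : ∀ z : ℝ, Integrable (fun x => deriv u x * u (x + z)) := by
    intro z
    have := hint.bdd_mul (huz_c z).aestronglyMeasurable
      (Eventually.of_forall (fun x => by rw [Real.norm_eq_abs, abs_of_nonneg (h0le _)]; exact hle1 _))
    simpa [mul_comm] using this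
  have i2 : ∀ z : ℝ, Integrable (fun x => u x * deriv u (x + z)) := fun z =>
    (hint_z z).bdd_mul huc.aestronglyMeasurable
      (Eventually.of_forall (fun x => by rw [Real.norm_eq_abs, abs_of_nonneg (h0le _)]; exact hle1 _))
  -- integration by parts
  have hibp : ∀ z : ℝ,
      (∫ x, deriv u x * u (x + z)) + ∫ x, u x * deriv u (x + z) = -1 := by
    intro z
    have hw : ∀ x : ℝ, HasDerivAt (fun y => u y * u (y + z))
        (deriv u x * u (x + z) + u x * deriv u (x + z)) x := by
      intro x
      have h2 : HasDerivAt (fun y : ℝ => u (y + z)) (deriv u (x + z)) x := by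
        simpa [Function.comp_def] using (hud (x + z)).hasDerivAt.comp x ((hasDerivAt_id x).add_const z)
      exact (hud x).hasDerivAt.mul h2
    have hab : ∀ a b : ℝ, ∫ x in a..b, (deriv u x * u (x + z) + u x * deriv u (x + z))
        = u b * u (b + z) - u a * u (a + z) := by
      intro a b
      exact intervalIntegral.integral_eq_sub_of_hasDerivAt (fun x _ => hw x)
        (((hu'c.mul (huz_c z)).add (huc.mul (hu'z_c z))).intervalIntegrable a b)
    have hsum : ∫ x, (deriv u x * u (x + z) + u x * deriv u (x + z)) = -1 := by
      refine integral_eq_of_symm_interval ((i1 z).add (i2 z))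
        (v := fun R => u R * u (R + z) - u (-R) * u (-R + z)) (fun R => hab (-R) R) ?_
      have ht1 : Tendsto (fun R : ℝ => u R * u (R + z)) atTop (𝓝 (0 * 0)) :=
        hlt.mul (hlt.comp (tendsto_atTop_add_const_right atTop z tendsto_id))
      have ht2 : Tendsto (fun R : ℝ => u (-R) * u (-R + z)) atTop (𝓝 (1 * 1)) :=
        (hlb.comp tendsto_neg_atTop_atBot).mul
          (hlb.comp ((tendsto_atBot_add_const_right atBot z tendsto_id).comp
            tendsto_neg_atTop_atBot))
      have := ht1.sub ht2
      norm_num at this ⊢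
      exact this
    rw [← integral_add (i1 z) (i2 z)]
    exact hsum
  -- reflection identity
  have hAneg : ∀ z : ℝ, (∫ x, deriv u x * u (x + -z)) = ∫ x, u x * deriv u (x + z) := by
    intro z
    have h := MeasureTheory.integral_add_right_eq_self (μ := volume)
      (fun x => deriv u x * u (x + -z)) z
    rw [← h]
    congr 1
    ext x
    rw [add_assoc, add_neg_cancel, add_zero, mul_comm]
  -- the function I
  set I : ℝ → ℝ := fun z => ∫ x, deriv u x * (u (x + z) - u x) with hIdef
  have hIsplit : ∀ z : ℝ, I z = (∫ x, deriv u x * u (x + z)) + 1 / 2 := by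
    intro z
    rw [hIdef]
    simp only []
    have : (fun x => deriv u x * (u (x + z) - u x))
        = fun x => deriv u x * u (x + z) - u x * deriv u x := by
      ext x; ring
    rw [this, integral_sub (i1 z) huu'_int, huu']
    ring
  have hIodd : ∀ z : ℝ, I (-z) = -I z := by
    intro z
    have h1 := hIsplit z
    have h2 := hIsplit (-z)
    have h3 := hibp z
    rw [hAneg z] at h2
    linarith
  -- Fubini
  have hFmeas : Continuous (fun p : ℝ × ℝ => deriv u p.1 * (u (p.1 + p.2) - u p.1)) :=
    (hu'c.comp continuous_fst).mul
      (((huc.comp (continuous_fst.add continuous_snd))).sub (huc.comp continuous_fst))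
  have hF : Integrable (fun p : ℝ × ℝ => deriv u p.1 * (u (p.1 + p.2) - u p.1))
      (volume.prod μ) := by
    have hg : Integrable (fun p : ℝ × ℝ => deriv u p.1 * (1 : ℝ)) (volume.prod μ) :=
      hint.mul_prod (integrable_const 1)
    refine hg.mono hFmeas.aestronglyMeasurable ?_
    filter_upwards with p
    rw [Real.norm_eq_abs, Real.norm_eq_abs, abs_mul, abs_mul, abs_one]
    exact mul_le_mul_of_nonneg_left (habs _ _) (abs_nonneg _)
  have hIint : Integrable I μ := by
    have := hF.integral_prod_right
    simpa [hIdef] using this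
  -- ∫ I dμ = 0
  have hImu : ∫ z, I z ∂μ = 0 := by
    have hmm : AEStronglyMeasurable I (Measure.map (fun z : ℝ => -z) μ) := by
      rw [hsymm]; exact hIint.aestronglyMeasurable
    have h1 : ∫ z, I z ∂μ = ∫ z, I (-z) ∂μ := by
      conv_lhs => rw [← hsymm]
      rw [integral_map measurable_neg.aemeasurable hmm]
    have h2 : ∫ z, I (-z) ∂μ = -∫ z, I z ∂μ := by
      simp only [hIodd]
      exact integral_neg I
    linarith [h1, h2]
  -- measurability of D
  have hDsm : StronglyMeasurable D := by
    have : StronglyMeasurable (fun p : ℝ × ℝ => u (p.1 + p.2) - u p.1) :=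
      ((huc.comp (continuous_fst.add continuous_snd)).sub
        (huc.comp continuous_fst)).stronglyMeasurable
    exact this.integral_prod_right'
  have hDu'int : Integrable (fun x => deriv u x * D x) := by
    have := hint.bdd_mul hDsm.aestronglyMeasurable (Eventually.of_forall hDb)
    simpa [mul_comm] using this
  -- ∫ u' D = 0
  have hu'D : ∫ x, deriv u x * D x = 0 := by
    have hps : ∀ x, deriv u x * D x = ∫ z, deriv u x * (u (x + z) - u x) ∂μ := by
      intro x
      rw [hDdef]
      exact (integral_const_mul _ _).symm
    calc ∫ x, deriv u x * D x
        = ∫ x, ∫ z, deriv u x * (u (x + z) - u x) ∂μ := by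
          exact integral_congr_ae (Eventually.of_forall hps)
      _ = ∫ z, (∫ x, deriv u x * (u (x + z) - u x)) ∂μ :=
          MeasureTheory.integral_integral_swap
            (f := fun x z => deriv u x * (u (x + z) - u x)) (by exact hF)
      _ = ∫ z, I z ∂μ := rfl
      _ = 0 := hImu
  -- ∫ f(u) u' = -∫₀¹ f
  set Φ : ℝ → ℝ := fun t => ∫ s in (0:ℝ)..t, f s with hΦdef
  have hΦc : Continuous Φ :=
    intervalIntegral.continuous_primitive (fun a b => hf.continuous.intervalIntegrable a b) 0
  have hfu_ab : ∀ a b : ℝ, ∫ x in a..b, f (u x) * deriv u x = Φ (u b) - Φ (u a) := by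
    intro a b
    have h := intervalIntegral.integral_comp_mul_deriv (a := a) (b := b)
      (f := u) (f' := deriv u) (g := f)
      (fun x _ => (hud x).hasDerivAt) hu'c.continuousOn hf.continuous
    rw [show (fun x => (f ∘ u) x * deriv u x) = fun x => f (u x) * deriv u x from rfl] at h
    rw [h, hΦdef]
    simp only []
    rw [← intervalIntegral.integral_interval_sub_left
      (hf.continuous.intervalIntegrable 0 (u b)) (hf.continuous.intervalIntegrable 0 (u a))]
  have hfu_int : Integrable (fun x => f (u x) * deriv u x) :=
    hint.bdd_mul (hf.continuous.comp huc).aestronglyMeasurable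
      (Eventually.of_forall (fun x => hK (u x) ⟨h0le x, hle1 x⟩))
  have hfu : ∫ x, f (u x) * deriv u x = -Φ 1 := by
    refine integral_eq_of_symm_interval hfu_int
      (v := fun R => Φ (u R) - Φ (u (-R))) (fun R => hfu_ab (-R) R) ?_
    have h1 : Tendsto (fun R : ℝ => Φ (u R)) atTop (𝓝 (Φ 0)) :=
      (hΦc.tendsto 0).comp hlt
    have h2 : Tendsto (fun R : ℝ => Φ (u (-R))) atTop (𝓝 (Φ 1)) :=
      (hΦc.tendsto 1).comp (hlb.comp tendsto_neg_atTop_atBot)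
    have h3 := h1.sub h2
    have hΦ0 : Φ 0 = 0 := intervalIntegral.integral_same
    rw [hΦ0, zero_sub] at h3
    exact h3
  -- final assembly
  have hpw : ∀ x, c * (deriv u x) ^ 2 = -(deriv u x * D x) - f (u x) * deriv u x := by
    intro x
    have h : c * deriv u x = -(D x) - f (u x) := by
      have := heq x
      rw [hDdef] at *
      linarith
    calc c * (deriv u x) ^ 2 = (c * deriv u x) * deriv u x := by ring
      _ = (-(D x) - f (u x)) * deriv u x := by rw [h]
      _ = -(deriv u x * D x) - f (u x) * deriv u x := by ring
  have hc2 : c * ∫ x : ℝ, (deriv u x) ^ 2 = ∫ x, (-(deriv u x * D x) - f (u x) * deriv u x) := by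
    rw [← integral_const_mul]
    exact integral_congr_ae (Eventually.of_forall hpw)
  have hn : Integrable (fun x => -(deriv u x * D x)) := hDu'int.neg
  rw [hc2, integral_sub hn hfu_int, integral_neg, hu'D, hfu]
  simp [hΦdef]
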